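/- For the one-dimensional Gaussian mechanism: if |a − b| ≤ Δ and σ ≥ Δ·√(2 ln(1.25/β))/ε with 0 < ε ≤ 1 and 0 < β < 1, then for every measurable S ⊆ ℝ, P[a + N(0,σ²) ∈ S] ≤ e^ε · P[b + N(0,σ²) ∈ S] + β. -/

import Mathlib

open MeasureTheory Real ProbabilityTheory Set
open scoped NNReal ENNReal

lemma gauss_map_neg (m : ℝ) (v : ℝ≥0) :
    (gaussianReal m v).map (fun x => -x) = gaussianReal (-m) v := by
  have h := gaussianReal_map_const_mul (μ := m) (v := v) (-1)
  simp only [neg_one_mul] at h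
  rw [h]
  congr 1
  ext; norm_num

lemma gauss_Iio_reflect (m : ℝ) (v : ℝ≥0) (z : ℝ) :
    gaussianReal m v (Iio z) = gaussianReal (-m) v (Ioi (-z)) := by
  rw [← gauss_map_neg, Measure.map_apply measurable_neg measurableSet_Ioi]
  congr 1
  ext x
  simp [neg_lt]

lemma gauss_half {v : ℝ≥0} (hv : v ≠ 0) : gaussianReal 0 v (Ici 0) ≤ 1/2 := by
  have hzero : gaussianReal 0 v {(0:ℝ)} = 0 :=
    (gaussianReal_absolutelyContinuous 0 hv) (volume_singleton)
  have hneg : gaussianReal 0 v (Iio 0) = gaussianReal 0 v (Ioi 0) := by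
    have h := gauss_Iio_reflect 0 v 0
    simpa using h
  have hIci : gaussianReal 0 v (Ici 0) = gaussianReal 0 v (Ioi 0) := by
    rw [← Ioi_union_left, measure_union (by simp) (by simp), hzero, add_zero]
  have htot : gaussianReal 0 v (Iio 0) + gaussianReal 0 v (Ici 0) = 1 := by
    rw [← measure_union (Iio_disjoint_Ici le_rfl) measurableSet_Ici, Iio_union_Ici]
    exact measure_univ
  rw [hIci, ← hneg, ← two_mul] at htot
  rw [hIci, ← hneg]
  rw [ENNReal.le_div_iff_mul_le (by norm_num) (by norm_num), mul_comm, htot]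

lemma gauss_tail {v : ℝ≥0} (hv : v ≠ 0) (m y : ℝ) (hy : m ≤ y) :
    gaussianReal m v (Ici y) ≤ ENNReal.ofReal (Real.exp (-(y-m)^2/(2*(v:ℝ))) / 2) := by
  set K : ℝ := Real.exp (-(y-m)^2/(2*(v:ℝ))) with hK
  have hKpos : 0 < K := Real.exp_pos _
  have hv' : (0:ℝ) < (v:ℝ) := by positivity
  rw [gaussianReal_apply m hv]
  have htrans : ∫⁻ x in Ici y, gaussianPDF m v x
      = ∫⁻ u in Ici (0:ℝ), gaussianPDF m v (u + y) := by
    have h := (measurePreserving_add_right (volume : Measure ℝ) y).setLIntegral_comp_emb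
      (MeasurableEquiv.addRight y).measurableEmbedding (gaussianPDF m v) (Ici 0)
    rw [show ((fun x => x + y) '' Ici (0:ℝ)) = Ici y by simp] at h
    exact h.symm
  rw [htrans]
  have hbound : ∫⁻ u in Ici (0:ℝ), gaussianPDF m v (u + y)
      ≤ ∫⁻ u in Ici (0:ℝ), ENNReal.ofReal K * gaussianPDF 0 v u := by
    apply setLIntegral_mono ((measurable_gaussianPDF 0 v).const_mul _)
    intro u hu
    rw [gaussianPDF, gaussianPDF, ← ENNReal.ofReal_mul hKpos.le]
    apply ENNReal.ofReal_le_ofReal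
    have hu0 : (0:ℝ) ≤ u := hu
    have Cnn : (0:ℝ) ≤ (√(2 * π * (v:ℝ)))⁻¹ := by positivity
    have key : rexp (-(u + y - m)^2/(2*(v:ℝ)))
        ≤ K * rexp (-(u - 0)^2/(2*(v:ℝ))) := by
      rw [hK, ← Real.exp_add, ← add_div]
      apply Real.exp_le_exp.mpr
      rw [div_le_div_iff₀ (by linarith) (by linarith)]
      nlinarith [mul_nonneg hu0 (sub_nonneg.mpr hy)]
    simp only [gaussianPDFReal]
    nlinarith [mul_le_mul_of_nonneg_left key Cnn]
  refine hbound.trans ?_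
  rw [lintegral_const_mul _ (measurable_gaussianPDF 0 v), ← gaussianReal_apply 0 hv]
  calc ENNReal.ofReal K * gaussianReal 0 v (Ici 0)
      ≤ ENNReal.ofReal K * (1/2) := mul_le_mul_right (gauss_half hv) _
    _ = ENNReal.ofReal (K / 2) := by
        rw [ENNReal.ofReal_div_of_pos two_pos, ENNReal.div_eq_inv_mul, mul_comm]
        norm_num [ENNReal.div_eq_inv_mul]

lemma gauss_strip {v : ℝ≥0} (hv : v ≠ 0) (m l : ℝ) :
    gaussianReal m v (Ioc l m) ≤ ENNReal.ofReal ((m - l) * (√(2*π*(v:ℝ)))⁻¹) := by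
  have hC : (0:ℝ) ≤ (√(2*π*(v:ℝ)))⁻¹ := by positivity
  rw [gaussianReal_apply m hv]
  calc ∫⁻ x in Ioc l m, gaussianPDF m v x
      ≤ ∫⁻ _ in Ioc l m, ENNReal.ofReal ((√(2*π*(v:ℝ)))⁻¹) := by
        apply setLIntegral_mono measurable_const
        intro x _
        apply ENNReal.ofReal_le_ofReal
        rw [gaussianPDFReal]
        nth_rewrite 2 [← mul_one ((√(2*π*(v:ℝ)))⁻¹)]
        apply mul_le_mul_of_nonneg_left _ hC
        apply Real.exp_le_one_iff.mpr
        have : (0:ℝ) < (v:ℝ) := by positivity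
        apply div_nonpos_of_nonpos_of_nonneg (by nlinarith [sq_nonneg (x - m)]) (by linarith)
    _ = ENNReal.ofReal ((√(2*π*(v:ℝ)))⁻¹) * volume (Ioc l m) := setLIntegral_const _ _
    _ ≤ ENNReal.ofReal ((m - l) * (√(2*π*(v:ℝ)))⁻¹) := by
        rw [Real.volume_Ioc, ← ENNReal.ofReal_mul hC, mul_comm]

set_option maxHeartbeats 1000000 in
lemma key_tail (a b Δ ε β σ : ℝ) (hc : 0 < a - b) (hcΔ : a - b ≤ Δ)
    (hε : 0 < ε) (hε1 : ε ≤ 1) (hβ0 : 0 < β) (hβ1 : β < 1)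
    (hσ : Δ * Real.sqrt (2 * Real.log (1.25 / β)) / ε ≤ σ) :
    gaussianReal a ((σ^2).toNNReal) (Ioi (σ^2*ε/(a-b) + (a+b)/2)) ≤ ENNReal.ofReal β := by
  set c : ℝ := a - b with hcdef
  set L : ℝ := Real.log (1.25 / β) with hLdef
  have hΔ : 0 < Δ := lt_of_lt_of_le hc hcΔ
  have hL5 : (1/5 : ℝ) ≤ L := by
    have h1 : Real.log (4/5) ≤ 4/5 - 1 := Real.log_le_sub_one_of_pos (by norm_num)
    have h2 : Real.log (5/4) = - Real.log (4/5) := by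
      rw [← Real.log_inv]; norm_num
    have h3 : (1.25 : ℝ) ≤ 1.25 / β := by
      rw [le_div_iff₀ hβ0]; nlinarith
    have h4 : Real.log 1.25 ≤ L := Real.log_le_log (by norm_num) h3
    have : (1.25 : ℝ) = 5/4 := by norm_num
    rw [this, h2] at h4
    linarith
  set x : ℝ := Real.sqrt (2 * L) with hxdef
  have hxpos : 0 < x := Real.sqrt_pos.mpr (by linarith)
  have hx2 : x^2 = 2 * L := Real.sq_sqrt (by linarith)
  have hx35 : 3/5 ≤ x := by
    rw [hxdef]
    rw [show (3/5 : ℝ) = Real.sqrt ((3/5)^2) from (Real.sqrt_sq (by norm_num)).symm]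
    apply Real.sqrt_le_sqrt; nlinarith
  have hσx : Δ * x / ε ≤ σ := hσ
  have hσpos : 0 < σ := lt_of_lt_of_le (by positivity) hσx
  have hv : ((σ^2 : ℝ).toNNReal) ≠ 0 := by
    simp [Real.toNNReal_eq_zero, not_le]
    positivity
  have hvℝ : (((σ^2 : ℝ).toNNReal) : ℝ) = σ^2 := Real.coe_toNNReal _ (by positivity)
  set y : ℝ := σ^2*ε/c + (a+b)/2 with hydef
  set τ : ℝ := σ*ε/c - c/(2*σ) with hτdef
  have hya : y = a + σ * τ := by
    rw [hydef, hτdef]; field_simp; ring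
  have hβL : β = 1.25 * Real.exp (-L) := by
    rw [hLdef, Real.exp_neg, Real.exp_log (by positivity)]
    field_simp
  have hτx : x - 1/(2*x) ≤ τ := by
    have h1 : x ≤ σ*ε/c := by
      rw [le_div_iff₀ hc]
      have : Δ * x ≤ σ * ε := by
        rw [div_le_iff₀ hε] at hσx; linarith
      nlinarith
    have h2 : c/(2*σ) ≤ 1/(2*x) := by
      rw [div_le_div_iff₀ (by linarith) (by positivity)]
      have : Δ * x ≤ σ * ε := by rw [div_le_iff₀ hε] at hσx; linarith
      nlinarith
    linarith
  by_cases hL4 : 1/4 ≤ L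
  · have ht0 : 0 ≤ x - 1/(2*x) := by
      rw [sub_nonneg, div_le_iff₀ (by positivity)]
      nlinarith
    have hτ0 : 0 ≤ τ := ht0.trans hτx
    have hay : a ≤ y := by
      rw [hya]
      have : 0 ≤ σ * τ := mul_nonneg hσpos.le hτ0
      linarith
    calc gaussianReal a ((σ^2:ℝ).toNNReal) (Ioi y)
        ≤ gaussianReal a ((σ^2:ℝ).toNNReal) (Ici y) := measure_mono Ioi_subset_Ici_self
      _ ≤ ENNReal.ofReal (Real.exp (-(y-a)^2/(2*(((σ^2:ℝ).toNNReal):ℝ))) / 2) :=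
          gauss_tail hv a y hay
      _ ≤ ENNReal.ofReal β := by
          apply ENNReal.ofReal_le_ofReal
          rw [hvℝ]
          have hya2 : (y - a)^2 = σ^2 * τ^2 := by rw [hya]; ring
          have hτt0 : (x - 1/(2*x))^2 ≤ τ^2 := by nlinarith
          have ht02 : 2*L - 1 ≤ (x - 1/(2*x))^2 := by
            have : (x - 1/(2*x))^2 = x^2 - 1 + 1/(4*x^2) := by field_simp; ring
            rw [this, hx2]
            have hL0 : (0:ℝ) < L := by linarith
            have h8 : (0:ℝ) < 1/(4*(2*L)) := by positivity
            linarith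
          have hexp : Real.exp (-(y-a)^2/(2*σ^2)) ≤ Real.exp (1/2 - L) := by
            apply Real.exp_le_exp.mpr
            rw [hya2]
            rw [div_le_iff₀ (by positivity)]
            nlinarith
          have hhalf : Real.exp (1/2 : ℝ) ≤ 2.5 := by
            nlinarith [Real.exp_one_lt_d9, Real.exp_pos (1/2 : ℝ),
              (Real.exp_add (1/2) (1/2)).symm, Real.exp_pos (1:ℝ)]
          have heq : Real.exp (1/2 - L) = Real.exp (1/2) * Real.exp (-L) := by
            rw [← Real.exp_add]; ring_nf
          have hexpL : 0 < Real.exp (-L) := Real.exp_pos _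
          calc Real.exp (-(y-a)^2/(2*σ^2)) / 2 ≤ Real.exp (1/2 - L) / 2 := by linarith
            _ = Real.exp (1/2) * Real.exp (-L) / 2 := by rw [heq]
            _ ≤ 2.5 * Real.exp (-L) / 2 := by nlinarith
            _ = 1.25 * Real.exp (-L) := by ring
            _ = β := hβL.symm
  · push_neg at hL4
    have hβbig : 15/16 ≤ β := by
      rw [hβL]
      have := Real.add_one_le_exp (-L)
      nlinarith
    have ht06 : -(1/6 : ℝ) ≤ x - 1/(2*x) := by
      have h1 : 1/(2*x) ≤ x + 1/6 := by
        rw [div_le_iff₀ (by positivity)]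
        nlinarith
      linarith
    have hyge : a - σ/6 ≤ y := by
      rw [hya]
      have h2 : -(1/6:ℝ) ≤ τ := ht06.trans hτx
      nlinarith
    have hstrip := gauss_strip (m := a) (l := a - σ/6) hv
    have htail := gauss_tail (m := a) (y := a) hv le_rfl
    calc gaussianReal a ((σ^2:ℝ).toNNReal) (Ioi y)
        ≤ gaussianReal a ((σ^2:ℝ).toNNReal) (Ioi (a - σ/6)) :=
          measure_mono (Ioi_subset_Ioi hyge)
      _ ≤ gaussianReal a ((σ^2:ℝ).toNNReal) (Ioc (a - σ/6) a)
          + gaussianReal a ((σ^2:ℝ).toNNReal) (Ici a) := by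
          refine (measure_mono ?_).trans (measure_union_le _ _)
          intro z hz
          rcases le_or_gt z a with h|h
          · exact Or.inl ⟨hz, h⟩
          · exact Or.inr h.le
      _ ≤ ENNReal.ofReal ((a - (a - σ/6)) * (√(2*π*(((σ^2:ℝ).toNNReal):ℝ)))⁻¹)
          + ENNReal.ofReal (Real.exp (-(a-a)^2/(2*(((σ^2:ℝ).toNNReal):ℝ))) / 2) :=
          add_le_add hstrip htail
      _ ≤ ENNReal.ofReal β := by
          have hnn : 0 ≤ (a - (a - σ/6)) * (√(2*π*(((σ^2:ℝ).toNNReal):ℝ)))⁻¹ := by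
            have h6 : a - (a - σ/6) = σ/6 := by ring
            rw [h6]; positivity
          rw [← ENNReal.ofReal_add hnn (by positivity)]
          apply ENNReal.ofReal_le_ofReal
          rw [hvℝ]
          have he0 : Real.exp (-(a-a)^2/(2*σ^2)) = 1 := by norm_num
          rw [he0]
          have hsq : Real.sqrt (2*π*σ^2) = Real.sqrt (2*π) * σ := by
            rw [Real.sqrt_mul (by positivity), Real.sqrt_sq hσpos.le]
          rw [hsq]
          have h2π : (2.5:ℝ) ≤ Real.sqrt (2*π) := by
            rw [show (2.5:ℝ) = Real.sqrt (2.5^2) from (Real.sqrt_sq (by norm_num)).symm]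
            apply Real.sqrt_le_sqrt
            nlinarith [Real.pi_gt_d6]
          have hsqpos : (0:ℝ) < Real.sqrt (2*π) := by linarith
          have heq : (a - (a - σ/6)) * (Real.sqrt (2*π) * σ)⁻¹ = (6 * Real.sqrt (2*π))⁻¹ := by
            field_simp
            ring
          rw [heq]
          have h15 : (6 * Real.sqrt (2*π))⁻¹ ≤ 1/15 := by
            rw [inv_le_comm₀ (by positivity) (by norm_num)]
            linarith
          linarith

lemma gauss_compare {v : ℝ≥0} (hv : v ≠ 0) {σ ε a b : ℝ} (hσ : (v:ℝ) = σ^2)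
    (A : Set ℝ)
    (hA : ∀ x ∈ A, (a-b)*(2*x - a - b) ≤ 2*σ^2*ε) :
    gaussianReal a v A ≤ ENNReal.ofReal (Real.exp ε) * gaussianReal b v A := by
  have hv' : (0:ℝ) < (v:ℝ) := by positivity
  rw [gaussianReal_apply a hv, gaussianReal_apply b hv,
    ← lintegral_const_mul _ (measurable_gaussianPDF b v)]
  apply setLIntegral_mono ((measurable_gaussianPDF b v).const_mul _)
  intro x hx
  rw [gaussianPDF, gaussianPDF, ← ENNReal.ofReal_mul (Real.exp_pos ε).le]
  apply ENNReal.ofReal_le_ofReal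
  have Cnn : (0:ℝ) ≤ (√(2 * π * (v:ℝ)))⁻¹ := by positivity
  have key : rexp (-(x - a)^2/(2*(v:ℝ))) ≤ rexp ε * rexp (-(x - b)^2/(2*(v:ℝ))) := by
    rw [← Real.exp_add]
    apply Real.exp_le_exp.mpr
    have h := hA x hx
    have h2v : (0:ℝ) < 2*σ^2 := by rw [hσ] at hv'; linarith
    rw [hσ, div_le_iff₀ h2v, add_mul, div_mul_cancel₀ _ (ne_of_gt h2v)]
    nlinarith
  simp only [gaussianPDFReal]
  nlinarith [mul_le_mul_of_nonneg_left key Cnn]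

set_option maxHeartbeats 1000000 in
theorem gaussian_mechanism_one_dim
    (a b Δ ε β σ : ℝ)
    (hΔ : 0 ≤ Δ) (hab : |a - b| ≤ Δ)
    (hε : 0 < ε) (hε1 : ε ≤ 1) (hβ0 : 0 < β) (hβ1 : β < 1)
    (hσ : σ ≥ Δ * Real.sqrt (2 * Real.log (1.25 / β)) / ε) :
    ∀ S : Set ℝ, MeasurableSet S →
      gaussianReal a (Real.toNNReal (σ ^ 2)) S
        ≤ ENNReal.ofReal (Real.exp ε) * gaussianReal b (Real.toNNReal (σ ^ 2)) S
          + ENNReal.ofReal β := by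
  intro S hS
  by_cases hab0 : a = b
  · subst hab0
    have h1 : (1:ℝ≥0∞) ≤ ENNReal.ofReal (Real.exp ε) := by
      rw [ENNReal.one_le_ofReal]
      exact Real.one_le_exp hε.le
    calc gaussianReal a ((σ^2:ℝ).toNNReal) S
        = 1 * gaussianReal a ((σ^2:ℝ).toNNReal) S := (one_mul _).symm
      _ ≤ ENNReal.ofReal (Real.exp ε) * gaussianReal a ((σ^2:ℝ).toNNReal) S :=
          mul_le_mul_left h1 _
      _ ≤ _ := le_self_add
  · -- a ≠ b
    have hcne : a - b ≠ 0 := sub_ne_zero.mpr hab0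
    have hcabs : 0 < |a - b| := abs_pos.mpr hcne
    have hΔpos : 0 < Δ := lt_of_lt_of_le hcabs hab
    have hL : 0 < Real.log (1.25 / β) := by
      apply Real.log_pos
      rw [lt_div_iff₀ hβ0]; nlinarith
    have hσpos : 0 < σ := by
      apply lt_of_lt_of_le _ hσ
      have : 0 < Real.sqrt (2 * Real.log (1.25 / β)) := Real.sqrt_pos.mpr (by linarith)
      positivity
    have hv : ((σ^2 : ℝ).toNNReal) ≠ 0 := by
      simp [Real.toNNReal_eq_zero, not_le]
      positivity
    have hvℝ : (((σ^2 : ℝ).toNNReal) : ℝ) = σ^2 := Real.coe_toNNReal _ (by positivity)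
    set x0 : ℝ := σ^2*ε/(a-b) + (a+b)/2 with hx0
    rcases hcne.lt_or_gt with hneg | hpos
    · -- a < b : good set is Ici x0, bad set is Iio x0
      have hc' : 0 < b - a := by linarith
      have hsplit : gaussianReal a ((σ^2:ℝ).toNNReal) S
          ≤ gaussianReal a ((σ^2:ℝ).toNNReal) (S ∩ Ici x0)
            + gaussianReal a ((σ^2:ℝ).toNNReal) (Iio x0) := by
        refine (measure_mono ?_).trans (measure_union_le _ _)
        intro z hz
        rcases le_or_gt x0 z with h|h
        · exact Or.inl ⟨hz, h⟩
        · exact Or.inr h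
      have hcomp : gaussianReal a ((σ^2:ℝ).toNNReal) (S ∩ Ici x0)
          ≤ ENNReal.ofReal (Real.exp ε) * gaussianReal b ((σ^2:ℝ).toNNReal) (S ∩ Ici x0) :=
        gauss_compare (σ := σ) (ε := ε) (a := a) (b := b) hv hvℝ (S ∩ Ici x0) (fun z hz => by
        have hzx : x0 ≤ z := hz.2
        have hd : (a - b) * (σ^2*ε/(a-b)) = σ^2*ε := by
          field_simp
        have hge : 2*(σ^2*ε/(a-b)) ≤ 2*z - a - b := by
          rw [hx0] at hzx; linarith
        nlinarith [mul_le_mul_of_nonpos_left hge (by linarith : a - b ≤ 0)])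
      have hpt : σ^2*ε/(-a - -b) + (-a + -b)/2 = -x0 := by
        rw [show -a - -b = -(a-b) by ring, div_neg, hx0]; ring
      have htail : gaussianReal a ((σ^2:ℝ).toNNReal) (Iio x0) ≤ ENNReal.ofReal β := by
        rw [gauss_Iio_reflect]
        have h := key_tail (-a) (-b) Δ ε β σ (by linarith) (by
          rw [show -a - -b = b - a by ring]
          calc b - a ≤ |b - a| := le_abs_self _
            _ = |a - b| := abs_sub_comm b a
            _ ≤ Δ := hab) hε hε1 hβ0 hβ1 hσ
        rwa [hpt] at h
      calc gaussianReal a ((σ^2:ℝ).toNNReal) S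
          ≤ gaussianReal a ((σ^2:ℝ).toNNReal) (S ∩ Ici x0)
            + gaussianReal a ((σ^2:ℝ).toNNReal) (Iio x0) := hsplit
        _ ≤ ENNReal.ofReal (Real.exp ε) * gaussianReal b ((σ^2:ℝ).toNNReal) (S ∩ Ici x0)
            + ENNReal.ofReal β := add_le_add hcomp htail
        _ ≤ _ := add_le_add_left
            (mul_le_mul_right (measure_mono inter_subset_left) _) _
    · -- b < a : good set is Iic x0, bad set is Ioi x0
      have hc : 0 < a - b := hpos
      have hsplit : gaussianReal a ((σ^2:ℝ).toNNReal) S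
          ≤ gaussianReal a ((σ^2:ℝ).toNNReal) (S ∩ Iic x0)
            + gaussianReal a ((σ^2:ℝ).toNNReal) (Ioi x0) := by
        refine (measure_mono ?_).trans (measure_union_le _ _)
        intro z hz
        rcases le_or_gt z x0 with h|h
        · exact Or.inl ⟨hz, h⟩
        · exact Or.inr h
      have hcomp : gaussianReal a ((σ^2:ℝ).toNNReal) (S ∩ Iic x0)
          ≤ ENNReal.ofReal (Real.exp ε) * gaussianReal b ((σ^2:ℝ).toNNReal) (S ∩ Iic x0) :=
        gauss_compare (σ := σ) (ε := ε) (a := a) (b := b) hv hvℝ (S ∩ Iic x0) (fun z hz => by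
        have hzx : z ≤ x0 := hz.2
        have hd : (a - b) * (σ^2*ε/(a-b)) = σ^2*ε := by
          field_simp
        have hge : 2*z - a - b ≤ 2*(σ^2*ε/(a-b)) := by
          rw [hx0] at hzx; linarith
        nlinarith [mul_le_mul_of_nonneg_left hge (by linarith : 0 ≤ a - b)])
      have htail : gaussianReal a ((σ^2:ℝ).toNNReal) (Ioi x0) ≤ ENNReal.ofReal β :=
        key_tail a b Δ ε β σ hc (le_of_abs_le hab) hε hε1 hβ0 hβ1 hσ
      calc gaussianReal a ((σ^2:ℝ).toNNReal) S
          ≤ gaussianReal a ((σ^2:ℝ).toNNReal) (S ∩ Iic x0)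
            + gaussianReal a ((σ^2:ℝ).toNNReal) (Ioi x0) := hsplit
        _ ≤ ENNReal.ofReal (Real.exp ε) * gaussianReal b ((σ^2:ℝ).toNNReal) (S ∩ Iic x0)
            + ENNReal.ofReal β := add_le_add hcomp htail
        _ ≤ _ := add_le_add_left
            (mul_le_mul_right (measure_mono inter_subset_left) _) _
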